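/- Every chain (totally ordered subset) in the quasiordered set of ultrafilters on the positive natural numbers under the relation ∼∣ has a least upper bound (up to the equivalence F =∼ G iff F ∼∣ G and G ∼∣ F). Moreover, if G is such a least upper bound of the chain ⟨F_i : i ∈ I⟩, then G ∩ U = ⋃_{i ∈ I} (F_i ∩ U). -/

import Mathlib

/-- A set of positive naturals is upward closed under divisibility. -/
def upClosed (A : Set ℕ+) : Prop := ∀ a ∈ A, ∀ n : ℕ+, a ∣ n → n ∈ A

/-- The divisibility relation `∼∣` on ultrafilters: `F ∩ U ⊆ G`. -/
def sdvd (F G : Ultrafilter ℕ+) : Prop := ∀ A : Set ℕ+, A ∈ F → upClosed A → A ∈ G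

/-- The product ultrafilter: `A ∈ F·G ↔ {n | {m | m*n ∈ A} ∈ G} ∈ F`. -/
def mulUF (F G : Ultrafilter ℕ+) : Ultrafilter ℕ+ :=
  F.bind (fun n => G.map (fun m => m * n))

/-- `D(F) = {A | {n | nℕ₊ ⊆ A} ∈ F}`. -/
def DF (F : Ultrafilter ℕ+) : Set (Set ℕ+) :=
  {A | {n : ℕ+ | ∀ m : ℕ+, n * m ∈ A} ∈ F}

/-- A strong antichain: pairwise coprime elements. -/
def strongAntichain (X : Set ℕ+) : Prop :=
  X.Pairwise (fun a b => Nat.Coprime (a : ℕ) (b : ℕ))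

/-- An N-free ultrafilter contains no `nℕ₊` with `n ≠ 1`. -/
def NfreeUF (F : Ultrafilter ℕ+) : Prop :=
  ∀ n : ℕ+, n ≠ 1 → {m : ℕ+ | n ∣ m} ∉ F

/-- every nonempty ∼∣-chain has a least upper bound G, and
G ∩ U = ⋃ᵢ (Fᵢ ∩ U). -/
theorem chain_has_lub {I : Type} [Nonempty I] (Fc : I → Ultrafilter ℕ+)
    (hchain : ∀ i j : I, sdvd (Fc i) (Fc j) ∨ sdvd (Fc j) (Fc i)) :
    ∃ G : Ultrafilter ℕ+,
      (∀ i, sdvd (Fc i) G) ∧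
      (∀ H : Ultrafilter ℕ+, (∀ i, sdvd (Fc i) H) → sdvd G H) ∧
      ({A : Set ℕ+ | A ∈ G ∧ upClosed A} =
        ⋃ i : I, {A : Set ℕ+ | A ∈ Fc i ∧ upClosed A}) := by
  classical
  set S : Set (Set ℕ+) := {A | upClosed A ∧ ∃ i, A ∈ Fc i} with hS
  set C : Set (Set ℕ+) := {B | ∃ A, upClosed A ∧ (∀ i, A ∉ Fc i) ∧ B = Aᶜ} with hC
  have key : ∀ t : Set (Set ℕ+), t.Finite → t ⊆ S → ∃ j, ∀ s ∈ t, s ∈ Fc j := by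
    intro t ht
    refine Set.Finite.induction_on (motive := fun u _ => u ⊆ S → ∃ j, ∀ s ∈ u, s ∈ Fc j)
      t ht (fun _ => ⟨Classical.arbitrary I, by simp⟩) ?_
    intro x u hx hf ih hsub
    obtain ⟨j, hj⟩ := ih (fun s hs => hsub (Set.mem_insert_of_mem _ hs))
    obtain ⟨hup, k, hk⟩ := hsub (Set.mem_insert _ _)
    rcases hchain j k with h | h
    · refine ⟨k, fun s hs => ?_⟩
      rcases hs with rfl | hs
      · exact hk
      · exact h s (hj s hs) (hsub (Set.mem_insert_of_mem _ hs)).1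
    · refine ⟨j, fun s hs => ?_⟩
      rcases hs with rfl | hs
      · exact h _ hk hup
      · exact hj s hs
  have hFIP : ∀ t ⊆ S ∪ C, t.Finite → (⋂₀ t).Nonempty := by
    intro t hsub ht
    obtain ⟨j, hj⟩ := key (t ∩ S) (ht.subset Set.inter_subset_left) Set.inter_subset_right
    have hm : ⋂₀ t ∈ Fc j := by
      rw [← Ultrafilter.mem_coe, Filter.sInter_mem ht]
      intro s hs
      by_cases hsS : s ∈ S
      · exact hj s ⟨hs, hsS⟩
      · rcases hsub hs with h | h
        · exact absurd h hsS
        · obtain ⟨A, hA, hnot, rfl⟩ := h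
          exact Ultrafilter.compl_mem_iff_notMem.2 (hnot j)
    exact Filter.nonempty_of_mem hm
  have hne : (Filter.generate (S ∪ C)).NeBot := by
    rw [Filter.generate_neBot_iff]; exact hFIP
  let G := @Ultrafilter.of _ (Filter.generate (S ∪ C)) hne
  have hgen : ∀ s ∈ S ∪ C, s ∈ G := fun s hs =>
    Filter.le_def.mp (@Ultrafilter.of_le _ (Filter.generate (S ∪ C)) hne) s
      (Filter.mem_generate_of_mem hs)
  have hmem : ∀ A ∈ G, upClosed A → ∃ i, A ∈ Fc i := by
    intro A hA hup
    by_contra h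
    push_neg at h
    have : Aᶜ ∈ G := hgen _ (Or.inr ⟨A, hup, h, rfl⟩)
    exact (Ultrafilter.compl_mem_iff_notMem.1 this) hA
  refine ⟨G, ?_, ?_, ?_⟩
  · intro i A hA hup; exact hgen A (Or.inl ⟨hup, i, hA⟩)
  · intro H hH A hA hup
    obtain ⟨i, hi⟩ := hmem A hA hup
    exact hH i A hi hup
  · ext A
    simp only [Set.mem_setOf_eq, Set.mem_iUnion]
    constructor
    · rintro ⟨hA, hup⟩
      obtain ⟨i, hi⟩ := hmem A hA hup
      exact ⟨i, hi, hup⟩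
    · rintro ⟨i, hi, hup⟩
      exact ⟨hgen A (Or.inl ⟨hup, i, hi⟩), hup⟩
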